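/- For each n ≥ 2, consider the Lie algebra 𝔪 with basis X, Z₁, …, Z_{n-1} and only non-zero brackets [X, Z_i] = Z_{i+1} for i = 1, …, n-2, graded by deg X = -1, deg Z_i = -i. Then 𝔪 is a graded nilpotent Lie algebra generated by its degree -1 component, and any graded nilpotent Lie algebra 𝔫 of the same dimension n with dim 𝔫_{-1} = 2 and dim 𝔫_{-i} = 1 for 2 ≤ i ≤ n-1 that is generated by 𝔫_{-1} and contains an element y ∈ 𝔫_{-1} with rank(ad y) = 1 and [y, 𝔫_{-i}] = 0 for i ≥ 2 is isomorphic to 𝔪 as a graded Lie algebra. -/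

import Mathlib

open Module LinearMap

private def gzseq {M : Type*} [LieRing M] (x y : M) : ℕ → M
  | 0 => 0
  | 1 => y
  | (i+2) => ⁅x, gzseq x y (i+1)⁆

private lemma gzseq_succ {M : Type*} [LieRing M] (x y : M) (i : ℕ) (hi : 1 ≤ i) :
    gzseq x y (i+1) = ⁅x, gzseq x y i⁆ := by
  obtain ⟨j, rfl⟩ := Nat.exists_eq_add_of_le' hi
  rfl

private lemma gcomp_zero {k : Type*} [Field k] {M : Type*} [AddCommGroup M] [Module k M]
    {mM : ℕ → Submodule k M} (hind : iSupIndep mM) {s : Finset ℕ} {u : ℕ → M}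
    (hu : ∀ j ∈ s, u j ∈ mM j) (hsum : ∑ j ∈ s, u j = 0) : ∀ j ∈ s, u j = 0 := by
  intro d hd
  have h1 : u d = -∑ j ∈ s.erase d, u j := by
    have h2 := Finset.sum_erase_add s u hd
    rw [hsum] at h2
    exact (neg_eq_of_add_eq_zero_right h2).symm
  have h2 : u d ∈ ⨆ j, ⨆ (_ : j ≠ d), mM j := by
    rw [h1]
    exact neg_mem (Submodule.sum_mem _ fun j hj =>
      Submodule.mem_iSup_of_mem j (Submodule.mem_iSup_of_mem (Finset.ne_of_mem_erase hj)
        (hu j (Finset.mem_of_mem_erase hj))))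
  have h3 := (iSupIndep_def.mp hind d).le_bot (Submodule.mem_inf.mpr ⟨hu d hd, h2⟩)
  simpa using h3

private lemma goursat_extract {k : Type*} [Field k] {M : Type*} [LieRing M] [LieAlgebra k M]
    (n : ℕ) (hn : 2 ≤ n) (mM : ℕ → Submodule k M)
    (hsumM : DirectSum.IsInternal fun i => mM i)
    (h0M : mM 0 = ⊥) (htopM : ∀ i, n ≤ i → mM i = ⊥)
    (hbrM : ∀ i j, ∀ x ∈ mM i, ∀ y ∈ mM j, ⁅x, y⁆ ∈ mM (i + j))
    (hgenM : ∀ i, 1 ≤ i →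
      mM (i + 1) = Submodule.span k {z | ∃ u ∈ mM 1, ∃ v ∈ mM i, ⁅u, v⁆ = z})
    (hdim1M : finrank k (mM 1) = 2)
    (hdimM : ∀ i, 2 ≤ i → i ≤ n - 1 → finrank k (mM i) = 1)
    (yM : M) (hyM : yM ∈ mM 1)
    (hrkM : finrank k (LinearMap.range (LieAlgebra.ad k M yM)) = 1)
    (hyM2 : ∀ i, 2 ≤ i → ∀ z ∈ mM i, ⁅yM, z⁆ = 0) :
    ∃ (x : M) (z : ℕ → M) (b : Basis (Fin n) k M),
      mM 1 = Submodule.span k {x, z 1} ∧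
      (∀ i, 2 ≤ i → mM i = Submodule.span k {z i}) ∧
      (∀ i, 1 ≤ i → ⁅x, z i⁆ = z (i + 1)) ∧
      (∀ i, n ≤ i → z i = 0) ∧
      (∀ i j, 1 ≤ i → 1 ≤ j → ⁅z i, z j⁆ = 0) ∧
      (∀ i : Fin n, b i = if (i : ℕ) = 0 then x else z i) := by
  classical
  -- find x ∈ mM 1 with ⁅yM, x⁆ ≠ 0
  obtain ⟨x, hx1, hxbr⟩ : ∃ x ∈ mM 1, ⁅yM, x⁆ ≠ 0 := by
    by_contra hcon
    push_neg at hcon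
    have had : LieAlgebra.ad k M yM = 0 := by
      ext m
      have hm : m ∈ ⨆ i, mM i := by
        rw [hsumM.submodule_iSup_eq_top]; trivial
      simp only [LieAlgebra.ad_apply, LinearMap.zero_apply]
      refine Submodule.iSup_induction (motive := fun m => ⁅yM, m⁆ = 0) mM hm ?_ (by simp) ?_
      · intro i w hw
        match i with
        | 0 => rw [h0M, Submodule.mem_bot] at hw; simp [hw]
        | 1 => exact hcon w hw
        | (j+2) => exact hyM2 (j+2) (by omega) w hw
      · intro a b ha hb; rw [lie_add, ha, hb, add_zero]
    rw [had, LinearMap.range_zero, finrank_bot] at hrkM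
    omega
  set z : ℕ → M := gzseq x yM with hzdef
  have hz1 : z 1 = yM := rfl
  have hzsucc : ∀ i, 1 ≤ i → ⁅x, z i⁆ = z (i + 1) := fun i hi => (gzseq_succ x yM i hi).symm
  have hzmem : ∀ i, 1 ≤ i → z i ∈ mM i := by
    intro i hi
    induction i, hi using Nat.le_induction with
    | base => exact hyM
    | succ i hi ih =>
      rw [← hzsucc i hi]
      have := hbrM 1 i x hx1 (z i) ih
      rwa [add_comm] at this
  have hyne : yM ≠ 0 := by rintro rfl; simp at hxbr
  -- x, yM are linearly independent
  have hpair : ∀ a b : k, a • x + b • yM = 0 → a = 0 ∧ b = 0 := by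
    intro a b hab
    have h1 : a • ⁅yM, x⁆ = 0 := by
      have := congrArg (fun m => ⁅yM, m⁆) hab
      simpa [lie_add, lie_smul, lie_self] using this
    have ha : a = 0 := by
      rcases smul_eq_zero.mp h1 with h | h
      · exact h
      · exact absurd h hxbr
    refine ⟨ha, ?_⟩
    rw [ha, zero_smul, zero_add] at hab
    rcases smul_eq_zero.mp hab with h | h
    · exact h
    · exact absurd h hyne
  -- mM 1 = span {x, yM}
  have hspan1 : mM 1 = Submodule.span k {x, z 1} := by
    rw [hz1]
    have hle : Submodule.span k {x, yM} ≤ mM 1 := by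
      rw [Submodule.span_le]
      rintro w (rfl | rfl)
      exacts [hx1, hyM]
    have hfd : FiniteDimensional k (mM 1) := Module.finite_of_finrank_pos (by omega)
    have hli : LinearIndependent k ![x, yM] := LinearIndependent.pair_iff.mpr hpair
    have hcard : finrank k (Submodule.span k (Set.range ![x, yM])) = 2 := by
      rw [finrank_span_eq_card hli]; simp
    have hrange : Set.range ![x, yM] = {x, yM} := by
      simp only [Matrix.range_cons, Matrix.range_empty, Set.union_empty,
        Set.union_singleton]
      exact Set.pair_comm yM x
    rw [hrange] at hcard
    exact (Submodule.eq_of_le_of_finrank_le hle (by omega)).symm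
  have hz2eq : z 2 = ⁅x, yM⁆ := by rw [← hzsucc 1 le_rfl, hz1]
  have hz2ne : z 2 ≠ 0 := by
    rw [hz2eq]
    intro h
    rw [← neg_eq_zero, lie_skew] at h
    exact hxbr h
  have hn3 : 3 ≤ n := by
    by_contra hcon
    have hb2 : mM 2 = ⊥ := htopM 2 (by omega)
    have hm2 := hzmem 2 (by omega)
    rw [hb2, Submodule.mem_bot] at hm2
    exact hz2ne hm2
  -- spans in degree ≥ 2
  have hspan2 : ∀ i, 2 ≤ i → mM i = Submodule.span k {z i} := by
    intro i hi
    induction i, hi using Nat.le_induction with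
    | base =>
      refine le_antisymm ?_ ?_
      · rw [hgenM 1 le_rfl, Submodule.span_le]
        rintro w ⟨u, hu, v, hv, rfl⟩
        rw [hspan1] at hu hv
        obtain ⟨a, b, rfl⟩ := Submodule.mem_span_pair.mp hu
        obtain ⟨c, d, rfl⟩ := Submodule.mem_span_pair.mp hv
        refine Submodule.mem_span_singleton.mpr ⟨a * d - b * c, ?_⟩
        rw [hz2eq, hz1]
        have hskew : ⁅yM, x⁆ = -⁅x, yM⁆ := by rw [← lie_skew x yM, neg_neg]
        simp only [lie_add, add_lie, lie_smul, smul_lie, lie_self, hskew, smul_zero, smul_neg,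
          smul_smul, zero_add, add_zero, sub_smul, neg_smul]
        module
      · rw [Submodule.span_le, Set.singleton_subset_iff]
        exact hzmem 2 (by omega)
    | succ i hi ih =>
      refine le_antisymm ?_ ?_
      · rw [hgenM i (by omega), Submodule.span_le]
        rintro w ⟨u, hu, v, hv, rfl⟩
        rw [hspan1] at hu
        rw [ih] at hv
        obtain ⟨a, b, rfl⟩ := Submodule.mem_span_pair.mp hu
        obtain ⟨c, rfl⟩ := Submodule.mem_span_singleton.mp hv
        refine Submodule.mem_span_singleton.mpr ⟨a * c, ?_⟩
        rw [← hzsucc i (by omega), hz1]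
        simp only [lie_add, add_lie, lie_smul, smul_lie, smul_smul,
          hyM2 i hi (z i) (hzmem i (by omega)), smul_zero, add_zero]
        rw [mul_comm a c]
      · rw [Submodule.span_le, Set.singleton_subset_iff]
        rw [← hzsucc i (by omega)]
        have := hbrM 1 i x hx1 (z i) (hzmem i (by omega))
        rwa [add_comm] at this
  -- vanishing above degree n
  have hztop : ∀ i, n ≤ i → z i = 0 := by
    intro i hi
    induction i, hi using Nat.le_induction with
    | base =>
      have := hzmem n (by omega)
      rwa [htopM n le_rfl, Submodule.mem_bot] at this
    | succ i hi ih =>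
      rw [← hzsucc i (by omega), ih, lie_zero]
  -- brackets between the z's vanish
  have hzz : ∀ i j, 1 ≤ i → 1 ≤ j → ⁅z i, z j⁆ = 0 := by
    have key1 : ∀ j, 1 ≤ j → ⁅z 1, z j⁆ = 0 := by
      intro j hj
      match j, hj with
      | 1, _ => rw [hz1]; exact lie_self yM
      | (t+2), _ => rw [hz1]; exact hyM2 (t+2) (by omega) _ (hzmem (t+2) (by omega))
    intro i
    induction i with
    | zero => intro j h0 _; omega
    | succ i ih =>
      intro j _ hj
      match i, ih with
      | 0, _ => exact key1 j hj
      | (t+1), ih =>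
        rw [← hzsucc (t+1) (by omega), lie_lie, ih j (by omega) hj, hzsucc j hj,
          ih (j+1) (by omega) (by omega), lie_zero, sub_zero]
  -- nonvanishing below degree n
  have hznz : ∀ j, 1 ≤ j → j < n → z j ≠ 0 := by
    intro j hj hjn
    match j, hj with
    | 1, _ => rw [hz1]; exact hyne
    | (t+2), _ =>
      intro h0
      have := hdimM (t+2) (by omega) (by omega)
      rw [hspan2 (t+2) (by omega), h0, Submodule.span_zero_singleton, finrank_bot] at this
      omega
  -- the basis
  set B : ℕ → M := fun j => if j = 0 then x else z j with hBdef
  have hind := hsumM.submodule_iSupIndep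
  have hli : LinearIndependent k (fun i : Fin n => B i) := by
    rw [Fintype.linearIndependent_iff]
    intro g hg
    set G : ℕ → k := fun j => if h : j < n then g ⟨j, h⟩ else 0 with hGdef
    have hGg : ∀ i : Fin n, G i = g i := fun i => dif_pos i.isLt
    set u : ℕ → M := fun j => if j = 1 then G 0 • x + G 1 • z 1 else G j • z j with hudef
    have hu1 : u 1 = G 0 • x + G 1 • z 1 := rfl
    have hu0 : u 0 = 0 := by
      show G 0 • z 0 = 0
      rw [show z 0 = 0 from rfl, smul_zero]
    have humem : ∀ j ∈ Finset.range n, u j ∈ mM j := by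
      intro j _
      match j with
      | 0 => rw [hu0]; exact zero_mem _
      | 1 => exact Submodule.add_mem _ (Submodule.smul_mem _ _ hx1)
               (Submodule.smul_mem _ _ (by rw [hz1]; exact hyM))
      | (t+2) => exact Submodule.smul_mem _ _ (hzmem (t+2) (by omega))
    have husum : ∑ j ∈ Finset.range n, u j = 0 := by
      have e2 : ∑ i : Fin n, g i • B (i:ℕ) = ∑ j ∈ Finset.range n, G j • B j := by
        rw [← Fin.sum_univ_eq_sum_range (fun j => G j • B j) n]
        exact Finset.sum_congr rfl fun i _ => by rw [hGg]
      have e3 : ∑ j ∈ Finset.range n, u j = ∑ j ∈ Finset.range n, G j • B j := by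
        rw [Finset.range_eq_Ico,
          Finset.sum_eq_sum_Ico_succ_bot (by omega : (0:ℕ) < n) (fun j => u j),
          Finset.sum_eq_sum_Ico_succ_bot (by omega : (1:ℕ) < n) (fun j => u j),
          Finset.sum_eq_sum_Ico_succ_bot (by omega : (0:ℕ) < n) (fun j => G j • B j),
          Finset.sum_eq_sum_Ico_succ_bot (by omega : (1:ℕ) < n) (fun j => G j • B j)]
        have etail : ∑ j ∈ Finset.Ico 2 n, u j = ∑ j ∈ Finset.Ico 2 n, G j • B j := by
          refine Finset.sum_congr rfl ?_
          intro j hj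
          have hj2 : 2 ≤ j := (Finset.mem_Ico.mp hj).1
          show (if j = 1 then G 0 • x + G 1 • z 1 else G j • z j) = G j • B j
          rw [if_neg (by omega), hBdef]
          simp only
          rw [if_neg (by omega)]
        rw [etail, hu0, hu1]
        have hB1 : B 1 = z 1 := rfl
        have h11 : (1:ℕ) + 1 = 2 := rfl
        have hB0 : B 0 = x := rfl
        rw [hB1, h11, hB0]
        abel
      rw [e3, ← e2]
      exact hg
    have hcz := gcomp_zero hind humem husum
    have hG : ∀ j, j < n → G j = 0 := by
      intro j hj
      have h1 := hcz 1 (Finset.mem_range.mpr (by omega))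
      rw [hu1, hz1] at h1
      match j with
      | 0 => exact (hpair _ _ h1).1
      | 1 => exact (hpair _ _ h1).2
      | (t+2) =>
        have h2 := hcz (t+2) (Finset.mem_range.mpr hj)
        have h3 : G (t+2) • z (t+2) = 0 := h2
        rcases smul_eq_zero.mp h3 with h | h
        · exact h
        · exact absurd h (hznz (t+2) (by omega) hj)
    intro i
    rw [← hGg i]
    exact hG i i.isLt
  have hsp : ⊤ ≤ Submodule.span k (Set.range fun i : Fin n => B i) := by
    rw [← hsumM.submodule_iSup_eq_top]
    refine iSup_le ?_
    intro j
    rcases Nat.lt_or_ge j n with hj | hj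
    · match j, hj with
      | 0, _ => rw [h0M]; exact bot_le
      | 1, hj =>
        rw [hspan1, Submodule.span_le]
        intro w hw
        simp only [Set.mem_insert_iff, Set.mem_singleton_iff] at hw
        rcases hw with rfl | rfl
        · exact Submodule.subset_span ⟨⟨0, by omega⟩, rfl⟩
        · exact Submodule.subset_span ⟨⟨1, hj⟩, rfl⟩
      | (t+2), hj =>
        rw [hspan2 (t+2) (by omega), Submodule.span_le, Set.singleton_subset_iff]
        exact Submodule.subset_span ⟨⟨t+2, hj⟩, rfl⟩
    · rw [htopM j hj]; exact bot_le
  refine ⟨x, z, Basis.mk hli hsp, hspan1, hspan2, hzsucc, hztop, hzz, ?_⟩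
  intro i
  rw [Basis.mk_apply, hBdef]
attribute [local instance 100] LieRing.ofAssociativeRing
/-- the symbol of the Goursat distribution (`[X, Z_i] = Z_{i+1}`)
is, up to graded isomorphism, the unique `n`-dimensional graded nilpotent Lie
algebra with `dim 𝔫₋₁ = 2`, `dim 𝔫₋ᵢ = 1` for `2 ≤ i ≤ n-1`, generated by
`𝔫₋₁` and possessing `y ∈ 𝔫₋₁` with `rank (ad y) = 1` and `⁅y, 𝔫₋ᵢ⁆ = 0` for
`i ≥ 2`.  Formally: any two such graded Lie algebras (and the Goursat symbol
is one of them) are isomorphic by a grading-preserving Lie isomorphism. -/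
theorem stmt11 {k : Type*} [Field k] [CharZero k] (n : ℕ) (hn : 2 ≤ n)
    {M N : Type*} [LieRing M] [LieAlgebra k M] [LieRing N] [LieAlgebra k N]
    (mM : ℕ → Submodule k M) (mN : ℕ → Submodule k N)
    -- `M` is a GNLA with the prescribed dimensions and a rank-one element
    (hsumM : DirectSum.IsInternal fun i => mM i)
    (h0M : mM 0 = ⊥) (htopM : ∀ i, n ≤ i → mM i = ⊥)
    (hbrM : ∀ i j, ∀ x ∈ mM i, ∀ y ∈ mM j, ⁅x, y⁆ ∈ mM (i + j))
    (hgenM : ∀ i, 1 ≤ i →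
      mM (i + 1) = Submodule.span k {z | ∃ u ∈ mM 1, ∃ v ∈ mM i, ⁅u, v⁆ = z})
    (hdim1M : finrank k (mM 1) = 2)
    (hdimM : ∀ i, 2 ≤ i → i ≤ n - 1 → finrank k (mM i) = 1)
    (yM : M) (hyM : yM ∈ mM 1)
    (hrkM : finrank k (LinearMap.range (LieAlgebra.ad k M yM)) = 1)
    (hyM2 : ∀ i, 2 ≤ i → ∀ z ∈ mM i, ⁅yM, z⁆ = 0)
    -- `N` is a GNLA with the same data
    (hsumN : DirectSum.IsInternal fun i => mN i)
    (h0N : mN 0 = ⊥) (htopN : ∀ i, n ≤ i → mN i = ⊥)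
    (hbrN : ∀ i j, ∀ x ∈ mN i, ∀ y ∈ mN j, ⁅x, y⁆ ∈ mN (i + j))
    (hgenN : ∀ i, 1 ≤ i →
      mN (i + 1) = Submodule.span k {z | ∃ u ∈ mN 1, ∃ v ∈ mN i, ⁅u, v⁆ = z})
    (hdim1N : finrank k (mN 1) = 2)
    (hdimN : ∀ i, 2 ≤ i → i ≤ n - 1 → finrank k (mN i) = 1)
    (yN : N) (hyN : yN ∈ mN 1)
    (hrkN : finrank k (LinearMap.range (LieAlgebra.ad k N yN)) = 1)
    (hyN2 : ∀ i, 2 ≤ i → ∀ z ∈ mN i, ⁅yN, z⁆ = 0) :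
    ∃ e : M ≃ₗ⁅k⁆ N, ∀ i,
      Submodule.map (e.toLinearEquiv.toLinearMap) (mM i) = mN i := by
  obtain ⟨x, z, b, hs1, hs2, hbr, hzn, hzz, hb⟩ :=
    goursat_extract n hn mM hsumM h0M htopM hbrM hgenM hdim1M hdimM yM hyM hrkM hyM2
  obtain ⟨x', z', b', hs1', hs2', hbr', hzn', hzz', hb'⟩ :=
    goursat_extract n hn mN hsumN h0N htopN hbrN hgenN hdim1N hdimN yN hyN hrkN hyN2
  have hn0 : 0 < n := by omega
  set e0 : M ≃ₗ[k] N := b.equiv b' (Equiv.refl _) with he0def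
  have he0 : ∀ i : Fin n, e0 (b i) = b' i := fun i => by
    rw [he0def, Basis.equiv_apply, Equiv.refl_apply]
  have hx : e0 x = x' := by
    have h0 := he0 ⟨0, hn0⟩
    rw [hb ⟨0, hn0⟩, hb' ⟨0, hn0⟩] at h0
    simpa using h0
  have hz : ∀ i, 1 ≤ i → e0 (z i) = z' i := by
    intro i hi
    rcases Nat.lt_or_ge i n with h | h
    · have h0 := he0 ⟨i, h⟩
      rw [hb ⟨i, h⟩, hb' ⟨i, h⟩] at h0
      have hval : ((⟨i, h⟩ : Fin n) : ℕ) = i := rfl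
      rw [hval, if_neg (by omega : ¬ i = 0), if_neg (by omega : ¬ i = 0)] at h0
      exact h0
    · rw [hzn i h, hzn' i h, map_zero]
  have hbil : ∀ i j : Fin n, e0 ⁅b i, b j⁆ = ⁅e0 (b i), e0 (b j)⁆ := by
    intro i j
    rw [he0 i, he0 j, hb i, hb j, hb' i, hb' j]
    split_ifs with hi hj hj
    · rw [lie_self, map_zero, lie_self]
    · rw [hbr _ (by omega), hz _ (by omega), hbr' _ (by omega)]
    · have h1 : ⁅z (i:ℕ), x⁆ = -⁅x, z (i:ℕ)⁆ := by rw [← lie_skew x, neg_neg]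
      have h2 : ⁅z' (i:ℕ), x'⁆ = -⁅x', z' (i:ℕ)⁆ := by rw [← lie_skew x', neg_neg]
      rw [h1, h2, map_neg, hbr _ (by omega), hz _ (by omega), hbr' _ (by omega)]
    · rw [hzz _ _ (by omega) (by omega), map_zero, hzz' _ _ (by omega) (by omega)]
  have hlie : ∀ a c : M, e0 ⁅a, c⁆ = ⁅e0 a, e0 c⁆ := by
    let F1 : M →ₗ[k] M →ₗ[k] N :=
      (LinearMap.llcomp k M M N (e0 : M →ₗ[k] N)).comp (LieAlgebra.ad k M).toLinearMap
    let F2 : M →ₗ[k] M →ₗ[k] N :=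
      LinearMap.compl₂ ((LieAlgebra.ad k N).toLinearMap.comp (e0 : M →ₗ[k] N)) (e0 : M →ₗ[k] N)
    have hF : F1 = F2 := by
      refine b.ext fun i => b.ext fun j => ?_
      simpa [F1, F2, LinearMap.llcomp_apply, LinearMap.compl₂_apply,
        LieAlgebra.ad_apply] using hbil i j
    intro a c
    have := LinearMap.congr_fun (LinearMap.congr_fun hF a) c
    simpa [F1, F2, LinearMap.llcomp_apply, LinearMap.compl₂_apply,
      LieAlgebra.ad_apply] using this
  let e : M ≃ₗ⁅k⁆ N :=
    { e0 with map_lie' := fun {a c} => hlie a c }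
  refine ⟨e, ?_⟩
  intro i
  have heL : e.toLinearEquiv.toLinearMap = (e0 : M →ₗ[k] N) := rfl
  rw [heL]
  match i with
  | 0 =>
    rw [h0M, h0N]
    exact Submodule.map_bot _
  | 1 =>
    rw [hs1, hs1', Submodule.map_span, Set.image_insert_eq, Set.image_singleton]
    rw [show (e0 : M →ₗ[k] N) x = x' from hx, show (e0 : M →ₗ[k] N) (z 1) = z' 1 from hz 1 le_rfl]
  | (t+2) =>
    rw [hs2 _ (by omega), hs2' _ (by omega), Submodule.map_span, Set.image_singleton,
      show (e0 : M →ₗ[k] N) (z (t+2)) = z' (t+2) from hz _ (by omega)]
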